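/- Let g : ℝⁿ → ℝ be differentiable with ∇g Lipschitz continuous with constant L > 0, let h : ℝⁿ → ℝ be convex, and set φ := g − h. Then for all x, d ∈ ℝⁿ, all λ ∈ ℝ, and all w ∈ ∂h(x): φ(x + λ d) ≤ φ(x) + λ ⟨∇g(x) − w, d⟩ + (L/2) λ² ‖d‖². Moreover, if h is strongly convex with modulus σ > 0, then φ(x + λ d) ≤ φ(x) + λ ⟨∇g(x) − w, d⟩ + ((L − σ)/2) λ² ‖d‖². -/

import Mathlib

open Set Filter Topology

noncomputable section

/-- The (convex-analysis) subdifferential of `f` at `x`: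
the set of `w` with `f z ≥ f x + ⟨w, z - x⟩` for all `z`. -/
def subdiff {n : ℕ} (f : EuclideanSpace ℝ (Fin n) → ℝ) (x : EuclideanSpace ℝ (Fin n)) :
    Set (EuclideanSpace ℝ (Fin n)) :=
  {w | ∀ z, f x + (inner ℝ w (z - x) : ℝ) ≤ f z}

/-- `f` is strongly convex with modulus `σ`. -/
def StrongConvexWith {n : ℕ} (σ : ℝ) (f : EuclideanSpace ℝ (Fin n) → ℝ) : Prop :=
  ∀ x y : EuclideanSpace ℝ (Fin n), ∀ t : ℝ, 0 < t → t < 1 →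
    f (t • x + (1 - t) • y) ≤ t * f x + (1 - t) * f y - σ / 2 * (t * (1 - t) * ‖x - y‖ ^ 2)



lemma descent (g : EuclideanSpace ℝ (Fin n) → ℝ)
    (g' : EuclideanSpace ℝ (Fin n) → EuclideanSpace ℝ (Fin n)) (L : ℝ)
    (hgrad : ∀ z, HasGradientAt g (g' z) z)
    (hlip : ∀ u v, ‖g' u - g' v‖ ≤ L * ‖u - v‖)
    (x d : EuclideanSpace ℝ (Fin n)) (lam : ℝ) :
    g (x + lam • d) ≤ g x + lam * (inner ℝ (g' x) d : ℝ) + L / 2 * lam ^ 2 * ‖d‖ ^ 2 := by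
  set A : ℝ := inner ℝ (g' x) d with hA
  set B : ℝ := ‖d‖ ^ 2 with hB
  set F : ℝ → ℝ := fun t => g (x + t • d) - t * A - L / 2 * t ^ 2 * B with hF
  have hc : ∀ t : ℝ, HasDerivAt (fun s : ℝ => x + s • d) d t := by
    intro t
    simpa using ((hasDerivAt_id t).smul_const d).const_add x
  have hFd : ∀ t : ℝ, HasDerivAt F ((inner ℝ (g' (x + t • d)) d : ℝ) - A - L * t * B) t := by
    intro t
    have h1 : HasDerivAt (fun s : ℝ => g (x + s • d)) ((inner ℝ (g' (x + t • d)) d : ℝ)) t := by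
      have := ((hgrad (x + t • d)).hasFDerivAt.comp_hasDerivAt t (hc t))
      exact this
    have h2 : HasDerivAt (fun s : ℝ => s * A) A t := by
      simpa using (hasDerivAt_id t).mul_const A
    have h3 : HasDerivAt (fun s : ℝ => L / 2 * s ^ 2 * B) (L * t * B) t := by
      have := (((hasDerivAt_pow 2 t).const_mul (L / 2)).mul_const B)
      exact this.congr_deriv (by push_cast; ring)
    exact (h1.sub h2).sub h3
  have hbound : ∀ t : ℝ, (inner ℝ (g' (x + t • d)) d : ℝ) - A ≤ L * |t| * B ∧
      -(L * |t| * B) ≤ (inner ℝ (g' (x + t • d)) d : ℝ) - A := by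
    intro t
    have h1 : (inner ℝ (g' (x + t • d)) d : ℝ) - A = inner ℝ (g' (x + t • d) - g' x) d := by
      rw [inner_sub_left]
    have h2 : |(inner ℝ (g' (x + t • d) - g' x) d : ℝ)| ≤ L * |t| * B := by
      calc |(inner ℝ (g' (x + t • d) - g' x) d : ℝ)| ≤ ‖g' (x + t • d) - g' x‖ * ‖d‖ :=
            abs_real_inner_le_norm _ _
        _ ≤ (L * ‖(x + t • d) - x‖) * ‖d‖ := by
            gcongr; exact hlip _ _
        _ = L * |t| * B := by
            simp [hB, norm_smul, Real.norm_eq_abs]; ring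
    rw [h1]
    constructor
    · exact le_trans (le_abs_self _) h2
    · exact neg_le_of_abs_le h2 |>.trans_eq rfl
  have key : F lam ≤ F 0 := by
    rcases le_or_gt 0 lam with hlam | hlam
    · have : AntitoneOn F (Icc 0 lam) := by
        apply antitoneOn_of_deriv_nonpos (convex_Icc 0 lam)
        · exact fun t _ => (hFd t).continuousAt.continuousWithinAt
        · exact fun t _ => ((hFd t).differentiableAt).differentiableWithinAt
        · intro t ht
          rw [interior_Icc] at ht
          rw [(hFd t).deriv]
          have := (hbound t).1
          rw [abs_of_pos ht.1] at this
          linarith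
      exact this (left_mem_Icc.2 hlam) ⟨hlam, le_refl _⟩ hlam
    · have : MonotoneOn F (Icc lam 0) := by
        apply monotoneOn_of_deriv_nonneg (convex_Icc lam 0)
        · exact fun t _ => (hFd t).continuousAt.continuousWithinAt
        · exact fun t _ => ((hFd t).differentiableAt).differentiableWithinAt
        · intro t ht
          rw [interior_Icc] at ht
          rw [(hFd t).deriv]
          have := (hbound t).2
          rw [abs_of_neg ht.2] at this
          have hB0 : 0 ≤ B := by positivity
          nlinarith
      exact this ⟨le_refl _, hlam.le⟩ (right_mem_Icc.2 hlam.le) hlam.le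
  have : F 0 = g x := by simp [hF]
  rw [this] at key
  simp only [hF] at key
  linarith

lemma strong_subgrad {n : ℕ} (h : EuclideanSpace ℝ (Fin n) → ℝ) (σ : ℝ)
    (hsc : StrongConvexWith σ h) (x w : EuclideanSpace ℝ (Fin n)) (hw : w ∈ subdiff h x)
    (z : EuclideanSpace ℝ (Fin n)) :
    h x + (inner ℝ w (z - x) : ℝ) + σ / 2 * ‖z - x‖ ^ 2 ≤ h z := by
  set C : ℝ := ‖z - x‖ ^ 2 with hC
  have key : ∀ t : ℝ, 0 < t → t < 1 →
      (inner ℝ w (z - x) : ℝ) + σ / 2 * ((1 - t) * C) ≤ h z - h x := by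
    intro t ht0 ht1
    have h1 := hsc z x t ht0 ht1
    have h2 := hw (t • z + (1 - t) • x)
    have h3 : (t • z + (1 - t) • x) - x = t • (z - x) := by
      rw [smul_sub]; module
    rw [h3, real_inner_smul_right] at h2
    have h4 : h x + t * (inner ℝ w (z - x) : ℝ) ≤ t * h z + (1 - t) * h x
        - σ / 2 * (t * (1 - t) * C) := le_trans h2 h1
    have h5 : t * ((inner ℝ w (z - x) : ℝ) + σ / 2 * ((1 - t) * C)) ≤ t * (h z - h x) := by
      nlinarith
    have := (mul_le_mul_iff_right₀ ht0).1 h5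
    linarith
  have htend : Tendsto (fun t : ℝ => (inner ℝ w (z - x) : ℝ) + σ / 2 * ((1 - t) * C))
      (𝓝[>] (0:ℝ)) (𝓝 ((inner ℝ w (z - x) : ℝ) + σ / 2 * ((1 - 0) * C))) := by
    apply Tendsto.mono_left _ nhdsWithin_le_nhds
    exact (tendsto_const_nhds.add (((tendsto_const_nhds.sub tendsto_id).mul
      tendsto_const_nhds).const_mul (σ / 2)))
  have hev : ∀ᶠ t in 𝓝[>] (0:ℝ),
      (inner ℝ w (z - x) : ℝ) + σ / 2 * ((1 - t) * C) ≤ h z - h x := by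
    filter_upwards [Ioo_mem_nhdsGT_of_mem (by norm_num : (0:ℝ) ∈ Ico (0:ℝ) 1)] with t ht
    exact key t ht.1 ht.2
  have := le_of_tendsto htend hev
  simp only [sub_zero, one_mul] at this
  linarith

theorem stmt14 {n : ℕ} (g h : EuclideanSpace ℝ (Fin n) → ℝ)
    (g' : EuclideanSpace ℝ (Fin n) → EuclideanSpace ℝ (Fin n)) (L : ℝ) (hL : 0 < L)
    (hgrad : ∀ z, HasGradientAt g (g' z) z)
    (hlip : ∀ u v, ‖g' u - g' v‖ ≤ L * ‖u - v‖)
    (hhconv : ConvexOn ℝ Set.univ h) :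
    (∀ (x d : EuclideanSpace ℝ (Fin n)) (lam : ℝ), ∀ w ∈ subdiff h x,
      g (x + lam • d) - h (x + lam • d) ≤
        (g x - h x) + lam * (inner ℝ (g' x - w) d : ℝ) + L / 2 * lam ^ 2 * ‖d‖ ^ 2) ∧
    (∀ σ : ℝ, 0 < σ → StrongConvexWith σ h →
      ∀ (x d : EuclideanSpace ℝ (Fin n)) (lam : ℝ), ∀ w ∈ subdiff h x,
        g (x + lam • d) - h (x + lam • d) ≤
          (g x - h x) + lam * (inner ℝ (g' x - w) d : ℝ) + (L - σ) / 2 * lam ^ 2 * ‖d‖ ^ 2) := by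
  constructor
  · intro x d lam w hw
    have h1 := descent g g' L hgrad hlip x d lam
    have h2 := hw (x + lam • d)
    have h3 : (x + lam • d) - x = lam • d := by abel
    rw [h3, real_inner_smul_right] at h2
    have h4 : (inner ℝ (g' x - w) d : ℝ) = inner ℝ (g' x) d - inner ℝ w d := inner_sub_left _ _ _
    rw [h4, mul_sub]
    linarith
  · intro σ hσ hsc x d lam w hw
    have h1 := descent g g' L hgrad hlip x d lam
    have h2 := strong_subgrad h σ hsc x w hw (x + lam • d)
    have h3 : (x + lam • d) - x = lam • d := by abel
    rw [h3, real_inner_smul_right] at h2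
    have h5 : ‖lam • d‖ ^ 2 = lam ^ 2 * ‖d‖ ^ 2 := by
      rw [norm_smul, mul_pow, Real.norm_eq_abs, sq_abs]
    rw [h5] at h2
    have h4 : (inner ℝ (g' x - w) d : ℝ) = inner ℝ (g' x) d - inner ℝ w d := inner_sub_left _ _ _
    have hgoal : (L - σ) / 2 * lam ^ 2 * ‖d‖ ^ 2
        = L / 2 * lam ^ 2 * ‖d‖ ^ 2 - σ / 2 * (lam ^ 2 * ‖d‖ ^ 2) := by ring
    rw [h4, mul_sub, hgoal]
    linarith
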